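/- Let M_0, M_1 be positive semidefinite operators with M_0 + M_1 = 1 on a finite-dimensional Hilbert space, let U_0, U_1 be unitaries, and let ρ be a full-rank density matrix. If Tr(√M_a · U_a† M_b U_a · √M_a · ρ) = 0 whenever a ≠ b (a, b ∈ {0,1}), then √M_b · U_a · √M_a = 0 for a ≠ b, and consequently M_0 and M_1 are projections. -/

import Mathlib

open Matrix ComplexOrder

/-- The positive semidefinite square root, as defined in the older Mathlib
(`Matrix.PosSemidef.sqrt`), which has since been removed. -/
noncomputable def Matrix.PosSemidef.sqrt {n 𝕜 : Type*} [Fintype n] [DecidableEq n] [RCLike 𝕜]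
    {A : Matrix n n 𝕜} (hA : A.PosSemidef) : Matrix n n 𝕜 :=
  (hA.1.eigenvectorUnitary : Matrix n n 𝕜) *
    diagonal ((RCLike.ofReal : ℝ → 𝕜) ∘ (√·) ∘ hA.1.eigenvalues) *
    (star hA.1.eigenvectorUnitary : Matrix n n 𝕜)

lemma Matrix.PosSemidef.posSemidef_sqrt {n 𝕜 : Type*} [Fintype n] [DecidableEq n] [RCLike 𝕜]
    {A : Matrix n n 𝕜} (hA : A.PosSemidef) : hA.sqrt.PosSemidef := by
  unfold Matrix.PosSemidef.sqrt
  have hD : (diagonal ((RCLike.ofReal : ℝ → 𝕜) ∘ (√·) ∘ hA.1.eigenvalues)).PosSemidef := by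
    rw [posSemidef_diagonal_iff]
    intro i
    simp only [Function.comp_apply, RCLike.ofReal_nonneg]
    exact Real.sqrt_nonneg _
  have := hD.mul_mul_conjTranspose_same (hA.1.eigenvectorUnitary : Matrix n n 𝕜)
  simpa [Matrix.star_eq_conjTranspose] using this

lemma Matrix.PosSemidef.sqrt_mul_self {n 𝕜 : Type*} [Fintype n] [DecidableEq n] [RCLike 𝕜]
    {A : Matrix n n 𝕜} (hA : A.PosSemidef) : hA.sqrt * hA.sqrt = A := by
  unfold Matrix.PosSemidef.sqrt
  set U : Matrix n n 𝕜 := (hA.1.eigenvectorUnitary : Matrix n n 𝕜) with hUdef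
  have hU : star U * U = 1 := Unitary.star_mul_self_of_mem hA.1.eigenvectorUnitary.2
  have hDD : diagonal ((RCLike.ofReal : ℝ → 𝕜) ∘ (√·) ∘ hA.1.eigenvalues) *
      diagonal ((RCLike.ofReal : ℝ → 𝕜) ∘ (√·) ∘ hA.1.eigenvalues) =
      diagonal ((RCLike.ofReal : ℝ → 𝕜) ∘ hA.1.eigenvalues) := by
    rw [diagonal_mul_diagonal]
    congr 1
    funext i
    simp only [Function.comp_apply]
    rw [← RCLike.ofReal_mul, Real.mul_self_sqrt (hA.eigenvalues_nonneg i)]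
  calc U * diagonal ((RCLike.ofReal : ℝ → 𝕜) ∘ (√·) ∘ hA.1.eigenvalues) * star U *
        (U * diagonal ((RCLike.ofReal : ℝ → 𝕜) ∘ (√·) ∘ hA.1.eigenvalues) * star U)
      = U * (diagonal ((RCLike.ofReal : ℝ → 𝕜) ∘ (√·) ∘ hA.1.eigenvalues) * (star U * U) *
        diagonal ((RCLike.ofReal : ℝ → 𝕜) ∘ (√·) ∘ hA.1.eigenvalues)) * star U := by
        simp only [Matrix.mul_assoc]
    _ = U * diagonal ((RCLike.ofReal : ℝ → 𝕜) ∘ hA.1.eigenvalues) * star U := by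
        rw [hU, Matrix.mul_one, hDD]
    _ = A := by
        conv_rhs => rw [hA.1.spectral_theorem]
        rfl

/-- A PSD matrix with zero trace is zero. -/
lemma psd_trace_zero {d : ℕ} {A : Matrix (Fin d) (Fin d) ℂ}
    (hA : A.PosSemidef) (h : A.trace = 0) : A = 0 := by
  have hs : hA.sqrtᴴ = hA.sqrt := hA.posSemidef_sqrt.1
  have hA' : hA.sqrtᴴ * hA.sqrt = A := by rw [hs, hA.sqrt_mul_self]
  have htr : (hA.sqrtᴴ * hA.sqrt).trace = 0 := by rw [hA']; exact h
  have hz : hA.sqrt = 0 := by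
    have hdiag : ∀ j, (hA.sqrtᴴ * hA.sqrt) j j = 0 := by
      have hnn : ∀ j ∈ Finset.univ, (0:ℂ) ≤ (hA.sqrtᴴ * hA.sqrt) j j := by
        intro j _
        simpa [Matrix.mul_apply, Matrix.conjTranspose_apply, dotProduct] using
          dotProduct_star_self_nonneg (fun i => hA.sqrt i j)
      intro j
      exact (Finset.sum_eq_zero_iff_of_nonneg hnn).1 htr j (Finset.mem_univ j)
    ext i j
    have := hdiag j
    simp only [Matrix.mul_apply, Matrix.conjTranspose_apply] at this
    have hcol : (fun i => hA.sqrt i j) = 0 := by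
      apply dotProduct_star_self_eq_zero.1
      simpa [dotProduct] using this
    simpa using congrFun hcol i
  rw [← hA.sqrt_mul_self, hz, mul_zero]

/-- Two PSD matrices with `trace (A*B) = 0` satisfy `A*B = 0`. -/
lemma psd_mul_psd_trace_zero {d : ℕ} {A B : Matrix (Fin d) (Fin d) ℂ}
    (hA : A.PosSemidef) (hB : B.PosSemidef) (h : (A * B).trace = 0) : A * B = 0 := by
  have hsB : hB.sqrtᴴ = hB.sqrt := hB.posSemidef_sqrt.1
  have hsA : hA.sqrtᴴ = hA.sqrt := hA.posSemidef_sqrt.1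
  have hC : (hB.sqrt * A * hB.sqrt).PosSemidef := by
    have := hA.conjTranspose_mul_mul_same hB.sqrt
    rwa [hsB] at this
  have htr : (hB.sqrt * A * hB.sqrt).trace = 0 := by
    have e : hB.sqrt * A * hB.sqrt = hB.sqrt * (A * hB.sqrt) := by rw [Matrix.mul_assoc]
    rw [e, Matrix.trace_mul_comm, Matrix.mul_assoc, hB.sqrt_mul_self]
    exact h
  have h0 : hB.sqrt * A * hB.sqrt = 0 := psd_trace_zero hC htr
  have hX : (hA.sqrt * hB.sqrt)ᴴ * (hA.sqrt * hB.sqrt) = 0 := by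
    rw [Matrix.conjTranspose_mul, hsA, hsB]
    calc hB.sqrt * hA.sqrt * (hA.sqrt * hB.sqrt)
        = hB.sqrt * (hA.sqrt * hA.sqrt) * hB.sqrt := by noncomm_ring
      _ = hB.sqrt * A * hB.sqrt := by rw [hA.sqrt_mul_self]
      _ = 0 := h0
  have hAB : hA.sqrt * hB.sqrt = 0 := Matrix.conjTranspose_mul_self_eq_zero.1 hX
  calc A * B = (hA.sqrt * hA.sqrt) * (hB.sqrt * hB.sqrt) := by
        rw [hA.sqrt_mul_self, hB.sqrt_mul_self]
    _ = hA.sqrt * ((hA.sqrt * hB.sqrt) * hB.sqrt) := by noncomm_ring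
    _ = 0 := by rw [hAB, zero_mul, mul_zero]

/-- Key projectivity step. -/
lemma proj_of_sqrt_rel {d : ℕ} {M0 M1 U : Matrix (Fin d) (Fin d) ℂ}
    (h0 : M0.PosSemidef) (h1 : M1.PosSemidef) (hsum : M0 + M1 = 1)
    (hU : U ∈ Matrix.unitaryGroup (Fin d) ℂ)
    (h : h1.sqrt * U * h0.sqrt = 0) : M0 * M0 = M0 := by
  have hUl : Uᴴ * U = 1 := by simpa [Matrix.star_eq_conjTranspose] using hU.1
  have hUr : U * Uᴴ = 1 := by simpa [Matrix.star_eq_conjTranspose] using hU.2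
  have h2 : M1 * U * h0.sqrt = 0 := by
    calc M1 * U * h0.sqrt = (h1.sqrt * h1.sqrt) * U * h0.sqrt := by
          rw [h1.sqrt_mul_self]
      _ = h1.sqrt * (h1.sqrt * U * h0.sqrt) := by noncomm_ring
      _ = 0 := by rw [h, mul_zero]
  have h3 : M0 * (U * h0.sqrt) = U * h0.sqrt := by
    have := congrArg (fun X => X * U * h0.sqrt) hsum
    simp only [add_mul, one_mul] at this
    rw [h2, add_zero] at this
    rw [← Matrix.mul_assoc]; exact this
  have hC : (Uᴴ * M0 * U) * h0.sqrt = h0.sqrt := by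
    calc (Uᴴ * M0 * U) * h0.sqrt = Uᴴ * (M0 * (U * h0.sqrt)) := by noncomm_ring
      _ = Uᴴ * (U * h0.sqrt) := by rw [h3]
      _ = h0.sqrt := by rw [← Matrix.mul_assoc, hUl, one_mul]
  have hCpsd : (Uᴴ * M0 * U).PosSemidef := h0.conjTranspose_mul_mul_same U
  have hCM0 : (Uᴴ * M0 * U) * M0 = M0 := by
    calc (Uᴴ * M0 * U) * M0 = (Uᴴ * M0 * U) * (h0.sqrt * h0.sqrt) := by
          rw [h0.sqrt_mul_self]
      _ = ((Uᴴ * M0 * U) * h0.sqrt) * h0.sqrt := by noncomm_ring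
      _ = h0.sqrt * h0.sqrt := by rw [hC]
      _ = M0 := h0.sqrt_mul_self
  have htrC : (Uᴴ * M0 * U).trace = M0.trace := by
    rw [Matrix.trace_mul_comm, ← Matrix.mul_assoc, hUr, Matrix.one_mul]
  have htr0 : ((Uᴴ * M0 * U) * M1).trace = 0 := by
    have hM1 : M1 = 1 - M0 := by rw [← hsum]; abel
    rw [hM1, Matrix.mul_sub, Matrix.mul_one, Matrix.trace_sub, hCM0, htrC, sub_self]
  have hCM1 : (Uᴴ * M0 * U) * M1 = 0 := psd_mul_psd_trace_zero hCpsd h1 htr0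
  have hCeq : Uᴴ * M0 * U = M0 := by
    have hM1 : M1 = 1 - M0 := by rw [← hsum]; abel
    rw [hM1, Matrix.mul_sub, Matrix.mul_one, sub_eq_zero] at hCM1
    rw [hCM1, hCM0]
  have hMS : M0 * h0.sqrt = h0.sqrt := by rw [hCeq] at hC; exact hC
  calc M0 * M0 = M0 * (h0.sqrt * h0.sqrt) := by rw [h0.sqrt_mul_self]
    _ = (M0 * h0.sqrt) * h0.sqrt := by rw [Matrix.mul_assoc]
    _ = h0.sqrt * h0.sqrt := by rw [hMS]
    _ = M0 := h0.sqrt_mul_self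

/-- From the Zeno trace condition, deduce the sqrt-level relation. -/
lemma sqrt_rel_of_trace {d : ℕ} {M0 M1 U ρ : Matrix (Fin d) (Fin d) ℂ}
    (h0 : M0.PosSemidef) (h1 : M1.PosSemidef)
    (hρ : ρ.PosDef)
    (hz : (h0.sqrt * (Uᴴ * M1 * U) * h0.sqrt * ρ).trace = 0) :
    h1.sqrt * U * h0.sqrt = 0 := by
  have hs0 : h0.sqrtᴴ = h0.sqrt := h0.posSemidef_sqrt.1
  have hs1 : h1.sqrtᴴ = h1.sqrt := h1.posSemidef_sqrt.1
  have hApsd : (h0.sqrt * (Uᴴ * M1 * U) * h0.sqrt).PosSemidef := by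
    have := h1.conjTranspose_mul_mul_same (U * h0.sqrt)
    rw [Matrix.conjTranspose_mul, hs0] at this
    have hEq : h0.sqrt * Uᴴ * M1 * (U * h0.sqrt) = h0.sqrt * (Uᴴ * M1 * U) * h0.sqrt := by
      noncomm_ring
    rwa [hEq] at this
  have hAρ : (h0.sqrt * (Uᴴ * M1 * U) * h0.sqrt) * ρ = 0 :=
    psd_mul_psd_trace_zero hApsd hρ.posSemidef hz
  have hdet : IsUnit ρ.det := (Matrix.isUnit_iff_isUnit_det _).1 hρ.isUnit
  have hA0 : h0.sqrt * (Uᴴ * M1 * U) * h0.sqrt = 0 := by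
    have e : h0.sqrt * (Uᴴ * M1 * U) * h0.sqrt
        = h0.sqrt * (Uᴴ * M1 * U) * h0.sqrt * ρ * ρ⁻¹ := by
      rw [Matrix.mul_assoc _ ρ, Matrix.mul_nonsing_inv _ hdet, Matrix.mul_one]
    rw [e, hAρ, Matrix.zero_mul]
  have hXX : (h1.sqrt * U * h0.sqrt)ᴴ * (h1.sqrt * U * h0.sqrt) = 0 := by
    have e1 : (h1.sqrt * U * h0.sqrt)ᴴ = h0.sqrt * (Uᴴ * h1.sqrt) := by
      rw [Matrix.conjTranspose_mul, Matrix.conjTranspose_mul, hs0, hs1]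
    rw [e1]
    calc h0.sqrt * (Uᴴ * h1.sqrt) * (h1.sqrt * U * h0.sqrt)
        = h0.sqrt * (Uᴴ * ((h1.sqrt * h1.sqrt) * U)) * h0.sqrt := by noncomm_ring
      _ = h0.sqrt * (Uᴴ * M1 * U) * h0.sqrt := by
          rw [h1.sqrt_mul_self, Matrix.mul_assoc Uᴴ]
      _ = 0 := hA0
  exact Matrix.conjTranspose_mul_self_eq_zero.1 hXX

theorem zeno_forces_projective (d : ℕ)
    (M0 M1 : Matrix (Fin d) (Fin d) ℂ)
    (h0 : M0.PosSemidef) (h1 : M1.PosSemidef) (hsum : M0 + M1 = 1)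
    (U0 U1 : Matrix (Fin d) (Fin d) ℂ)
    (hU0 : U0 ∈ Matrix.unitaryGroup (Fin d) ℂ)
    (hU1 : U1 ∈ Matrix.unitaryGroup (Fin d) ℂ)
    (ρ : Matrix (Fin d) (Fin d) ℂ) (hρ : ρ.PosDef) (hρtr : ρ.trace = 1)
    (hz01 : (h0.sqrt * (U0ᴴ * M1 * U0) * h0.sqrt * ρ).trace = 0)
    (hz10 : (h1.sqrt * (U1ᴴ * M0 * U1) * h1.sqrt * ρ).trace = 0) :
    h1.sqrt * U0 * h0.sqrt = 0 ∧ h0.sqrt * U1 * h1.sqrt = 0 ∧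
      M0 * M0 = M0 ∧ M1 * M1 = M1 := by
  have hr01 : h1.sqrt * U0 * h0.sqrt = 0 := sqrt_rel_of_trace h0 h1 hρ hz01
  have hr10 : h0.sqrt * U1 * h1.sqrt = 0 := sqrt_rel_of_trace h1 h0 hρ hz10
  refine ⟨hr01, hr10, ?_, ?_⟩
  · exact proj_of_sqrt_rel h0 h1 hsum hU0 hr01
  · exact proj_of_sqrt_rel h1 h0 (by rw [add_comm]; exact hsum) hU1 hr10
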